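/- arXiv:1305.1639 — 3 statements merged into one kernel-verified Lean document; each statement's English description precedes it below -/
import Mathlib

section
/- For every positive integer n, τ₂(n)² = Σ_{d² ∣ n} μ(d) · τ₄(n/d²), where τ₄ is the 4-dimensional divisor function (number of ordered quadruples (a,b,c,e) with abce = n). -/
open ArithmeticFunction Finset
open scoped ArithmeticFunction.zeta ArithmeticFunction.sigma

/-- `μ(√n)` if `n` is a square, `0` otherwise. -/
def sqmu : ArithmeticFunction ℤ :=
  ⟨fun n => if IsSquare n then ArithmeticFunction.moebius n.sqrt else 0, by simp⟩

lemma sqmu_apply (n : ℕ) :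
    sqmu n = if IsSquare n then ArithmeticFunction.moebius n.sqrt else 0 := rfl

lemma sqmu_sq (d : ℕ) : sqmu (d ^ 2) = ArithmeticFunction.moebius d := by
  rw [sqmu_apply, if_pos ⟨d, (pow_two d)⟩, Nat.sqrt_eq' d]

lemma isSquare_mul_iff {m n : ℕ} (h : m.Coprime n) :
    IsSquare (m * n) ↔ IsSquare m ∧ IsSquare n := by
  constructor
  · rintro ⟨c, hc⟩
    have hc' : m * n = c ^ 2 := by rw [hc, pow_two]
    have hu : IsUnit (gcd m n) := Nat.isUnit_iff.mpr h
    obtain ⟨a, ha⟩ := exists_eq_pow_of_mul_eq_pow hu hc'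
    have hc'' : n * m = c ^ 2 := by rw [mul_comm]; exact hc'
    obtain ⟨b, hb⟩ := exists_eq_pow_of_mul_eq_pow (by rwa [gcd_comm]) hc''
    exact ⟨⟨a, by rw [ha, pow_two]⟩, ⟨b, by rw [hb, pow_two]⟩⟩
  · rintro ⟨hm, hn⟩; exact hm.mul hn

lemma sqmu_mult : sqmu.IsMultiplicative := by
  refine ⟨by simp [sqmu_apply], ?_⟩
  intro m n hmn
  by_cases hm : IsSquare m
  · by_cases hn : IsSquare n
    · obtain ⟨a, rfl⟩ := hm
      obtain ⟨b, rfl⟩ := hn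
      have hab : a.Coprime b :=
        Nat.Coprime.coprime_dvd_right (Dvd.intro b rfl)
          (Nat.Coprime.coprime_dvd_left (Dvd.intro a rfl) hmn)
      have h1 : a * a * (b * b) = (a * b) ^ 2 := by ring
      rw [h1, ← pow_two a, ← pow_two b, sqmu_sq, sqmu_sq, sqmu_sq,
        isMultiplicative_moebius.map_mul_of_coprime hab]
    · rw [sqmu_apply (m * n), if_neg (fun hsq => hn ((isSquare_mul_iff hmn).mp hsq).2),
        sqmu_apply n, if_neg hn, mul_zero]
  · rw [sqmu_apply (m * n), if_neg (fun hsq => hm ((isSquare_mul_iff hmn).mp hsq).1),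
      sqmu_apply m, if_neg hm, zero_mul]

lemma sqmu_prime_pow {p : ℕ} (hp : p.Prime) (i : ℕ) :
    sqmu (p ^ i) = if i = 0 then 1 else if i = 2 then -1 else 0 := by
  rcases Nat.even_or_odd i with ⟨j, rfl⟩ | hodd
  · have h0 : p ^ (j + j) = (p ^ j) ^ 2 := by ring
    rw [h0, sqmu_sq]
    rcases Nat.eq_zero_or_pos j with rfl | hj
    · simp [isMultiplicative_moebius.map_one]
    rcases eq_or_lt_of_le (show 1 ≤ j from hj) with h1 | h2
    · simp [← h1, pow_one, moebius_apply_prime hp]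
    · rw [moebius_apply_prime_pow hp (by omega), if_neg (by omega),
        if_neg (by omega), if_neg (by omega)]
  · have hns : ¬ IsSquare (p ^ i) := by
      rintro ⟨c, hc⟩
      have hc0 : c ≠ 0 := by
        rintro rfl; simp only [mul_zero] at hc
        exact (pow_ne_zero i hp.pos.ne') hc
      have h2 := congrArg (fun x : ℕ => x.factorization p) hc
      simp only [hp.factorization_pow, Nat.factorization_mul hc0 hc0,
        Finsupp.single_eq_same, Finsupp.add_apply] at h2
      obtain ⟨j, rfl⟩ := hodd
      omega
    obtain ⟨j, rfl⟩ := hodd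
    rw [sqmu_apply, if_neg hns, if_neg (by omega), if_neg (by omega)]

lemma gauss_sum (k : ℕ) : (∑ x ∈ Finset.range (k + 1), (x + 1)) * 2 = (k + 1) * (k + 2) := by
  induction k with
  | zero => simp
  | succ k ih => rw [Finset.sum_range_succ, add_mul, ih]; ring

lemma cube_sum (k : ℕ) :
    (∑ x ∈ Finset.range (k + 1), (x + 1) * (x + 2)) * 3 = (k + 1) * (k + 2) * (k + 3) := by
  induction k with
  | zero => simp
  | succ k ih => rw [Finset.sum_range_succ, add_mul, ih]; ring

lemma t3_prime_pow {p : ℕ} (hp : p.Prime) (k : ℕ) :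
    (ζ * ζ * ζ : ArithmeticFunction ℕ) (p ^ k) * 2 = (k + 1) * (k + 2) := by
  have h : (ζ * ζ * ζ : ArithmeticFunction ℕ) = σ 0 * ζ := by
    rw [← zeta_mul_pow_eq_sigma, pow_zero_eq_zeta]
  rw [h, mul_zeta_apply, Nat.sum_divisors_prime_pow hp]
  simp only [sigma_zero_apply_prime_pow hp]
  exact gauss_sum k

lemma t4_prime_pow {p : ℕ} (hp : p.Prime) (k : ℕ) :
    (ζ * ζ * ζ * ζ : ArithmeticFunction ℕ) (p ^ k) * 6 = (k + 1) * (k + 2) * (k + 3) := by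
  rw [mul_zeta_apply, Nat.sum_divisors_prime_pow hp]
  rw [← cube_sum k, Finset.sum_mul, Finset.sum_mul]
  refine Finset.sum_congr rfl fun x _ => ?_
  have := t3_prime_pow hp x
  calc (ζ * ζ * ζ : ArithmeticFunction ℕ) (p ^ x) * 6
      = ((ζ * ζ * ζ : ArithmeticFunction ℕ) (p ^ x) * 2) * 3 := by ring
    _ = (x + 1) * (x + 2) * 3 := by rw [this]

lemma key_eq :
    (((ζ * ζ : ArithmeticFunction ℕ) : ArithmeticFunction ℤ)).pmul
      ((ζ * ζ : ArithmeticFunction ℕ) : ArithmeticFunction ℤ)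
    = sqmu * ((ζ * ζ * ζ * ζ : ArithmeticFunction ℕ) : ArithmeticFunction ℤ) := by
  have hLmult : ((((ζ * ζ : ArithmeticFunction ℕ) : ArithmeticFunction ℤ)).pmul
      ((ζ * ζ : ArithmeticFunction ℕ) : ArithmeticFunction ℤ)).IsMultiplicative :=
    ((isMultiplicative_zeta.mul isMultiplicative_zeta).natCast).pmul
      ((isMultiplicative_zeta.mul isMultiplicative_zeta).natCast)
  have hRmult : (sqmu *
      ((ζ * ζ * ζ * ζ : ArithmeticFunction ℕ) : ArithmeticFunction ℤ)).IsMultiplicative :=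
    sqmu_mult.mul (((isMultiplicative_zeta.mul isMultiplicative_zeta).mul
      isMultiplicative_zeta).mul isMultiplicative_zeta).natCast
  rw [ArithmeticFunction.IsMultiplicative.eq_iff_eq_on_prime_powers _ hLmult _ hRmult]
  intro p k hp
  have hzz2 : (ζ * ζ : ArithmeticFunction ℕ) = σ 0 := by
    rw [← zeta_mul_pow_eq_sigma, pow_zero_eq_zeta]
  have hzzpk : ((ζ * ζ : ArithmeticFunction ℕ)) (p ^ k) = k + 1 := by
    rw [hzz2]; exact sigma_zero_apply_prime_pow hp
  have hLval : (((ζ * ζ : ArithmeticFunction ℕ) : ArithmeticFunction ℤ)).pmul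
      ((ζ * ζ : ArithmeticFunction ℕ) : ArithmeticFunction ℤ) (p ^ k) = ((k : ℤ) + 1) ^ 2 := by
    rw [ArithmeticFunction.pmul_apply, natCoe_apply, hzzpk]
    push_cast; ring
  have hRval : (sqmu * ((ζ * ζ * ζ * ζ : ArithmeticFunction ℕ) : ArithmeticFunction ℤ)) (p ^ k) =
      ∑ i ∈ Finset.range (k + 1),
        sqmu (p ^ i) * ((ζ * ζ * ζ * ζ : ArithmeticFunction ℕ) (p ^ k / p ^ i) : ℤ) := by
    rw [ArithmeticFunction.mul_apply,
      Nat.sum_divisorsAntidiagonal (fun a b => sqmu a *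
        (((ζ * ζ * ζ * ζ : ArithmeticFunction ℕ) : ArithmeticFunction ℤ)) b),
      Nat.sum_divisors_prime_pow hp]
    simp only [natCoe_apply]
  rw [hLval, hRval]
  simp only [sqmu_prime_pow hp]
  have hmul1 : (ζ * ζ * ζ * ζ : ArithmeticFunction ℕ) 1 = 1 :=
    (((isMultiplicative_zeta.mul isMultiplicative_zeta).mul
      isMultiplicative_zeta).mul isMultiplicative_zeta).map_one
  match k with
  | 0 =>
    rw [Finset.sum_range_one, if_pos rfl, pow_zero, Nat.div_one, hmul1]
    norm_num
  | 1 =>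
    have h6 := t4_prime_pow hp 1
    rw [pow_one] at h6
    have ht4p : (ζ * ζ * ζ * ζ : ArithmeticFunction ℕ) p = 4 := by omega
    rw [Finset.sum_range_succ, Finset.sum_range_one, pow_zero, Nat.div_one, pow_one,
      if_pos rfl, ht4p, if_neg one_ne_zero, if_neg (by omega : (1 : ℕ) ≠ 2)]
    norm_num
  | (j+2) =>
    have hdiv0 : p ^ (j + 2) / p ^ 0 = p ^ (j + 2) := by simp
    have hdiv2 : p ^ (j + 2) / p ^ 2 = p ^ j := by
      rw [Nat.pow_div (by omega) hp.pos]
      norm_num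
    have hsum : ∑ i ∈ Finset.range (j + 2 + 1),
        (if i = 0 then 1 else if i = 2 then (-1 : ℤ) else 0) *
          ((ζ * ζ * ζ * ζ : ArithmeticFunction ℕ) (p ^ (j + 2) / p ^ i) : ℤ)
        = ((ζ * ζ * ζ * ζ : ArithmeticFunction ℕ) (p ^ (j + 2)) : ℤ) +
          (-1) * ((ζ * ζ * ζ * ζ : ArithmeticFunction ℕ) (p ^ j) : ℤ) := by
      rw [Finset.sum_eq_add (0 : ℕ) 2 (by omega)
        (fun c _ hc => by rw [if_neg hc.1, if_neg hc.2, zero_mul])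
        (fun h => absurd (Finset.mem_range.mpr (by omega)) h)
        (fun h => absurd (Finset.mem_range.mpr (by omega)) h)]
      simp [hdiv0, hdiv2]
    rw [hsum]
    have hA2 : (ζ * ζ * ζ * ζ : ArithmeticFunction ℕ) (p ^ (j + 2)) * 6
        = (j + 3) * (j + 4) * (j + 5) := by rw [t4_prime_pow hp (j + 2)]
    have hB2 := t4_prime_pow hp j
    have hA' : ((ζ * ζ * ζ * ζ : ArithmeticFunction ℕ) (p ^ (j + 2)) : ℤ) * 6
        = ((j : ℤ) + 3) * ((j : ℤ) + 4) * ((j : ℤ) + 5) := by exact_mod_cast hA2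
    have hB' : ((ζ * ζ * ζ * ζ : ArithmeticFunction ℕ) (p ^ j) : ℤ) * 6
        = ((j : ℤ) + 1) * ((j : ℤ) + 2) * ((j : ℤ) + 3) := by exact_mod_cast hB2
    have hgoal : ((j : ℤ) + 3) ^ 2 * 6
        = ((ζ * ζ * ζ * ζ : ArithmeticFunction ℕ) (p ^ (j + 2)) : ℤ) * 6
          - ((ζ * ζ * ζ * ζ : ArithmeticFunction ℕ) (p ^ j) : ℤ) * 6 := by
      rw [hA', hB']; ring
    push_cast
    nlinarith [hgoal]

open ArithmeticFunction in
/-- `τ₂(n)² = ∑_{d² ∣ n} μ(d) τ₄(n/d²)`, where `τ₄ = 1 ⋆ 1 ⋆ 1 ⋆ 1`. -/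
theorem divisor_count_sq_eq_moebius_conv_tau4 (n : ℕ) (hn : 0 < n) :
    ((n.divisors.card : ℤ)) ^ 2 =
      ∑ d ∈ n.divisors.filter (fun d => d ^ 2 ∣ n),
        ArithmeticFunction.moebius d *
          (((ArithmeticFunction.zeta * ArithmeticFunction.zeta * ArithmeticFunction.zeta *
              ArithmeticFunction.zeta) (n / d ^ 2) : ℕ) : ℤ) := by
  have hzzn : (ζ * ζ : ArithmeticFunction ℕ) = σ 0 := by
    rw [← zeta_mul_pow_eq_sigma, pow_zero_eq_zeta]
  have hLn : (((ζ * ζ : ArithmeticFunction ℕ) : ArithmeticFunction ℤ)).pmul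
      ((ζ * ζ : ArithmeticFunction ℕ) : ArithmeticFunction ℤ) n
      = ((n.divisors.card : ℤ)) ^ 2 := by
    rw [ArithmeticFunction.pmul_apply, natCoe_apply, hzzn, sigma_zero_apply]
    ring
  have hRn : (sqmu * ((ζ * ζ * ζ * ζ : ArithmeticFunction ℕ) : ArithmeticFunction ℤ)) n
      = ∑ d ∈ n.divisors, sqmu d * ((ζ * ζ * ζ * ζ : ArithmeticFunction ℕ) (n / d) : ℤ) := by
    rw [ArithmeticFunction.mul_apply,
      Nat.sum_divisorsAntidiagonal (fun a b => sqmu a *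
        (((ζ * ζ * ζ * ζ : ArithmeticFunction ℕ) : ArithmeticFunction ℤ)) b)]
    simp only [natCoe_apply]
  rw [← hLn, key_eq, hRn]
  rw [← Finset.sum_filter_of_ne (p := fun d => IsSquare d)
    (fun x _ hfx => by
      by_contra hx
      rw [sqmu_apply, if_neg hx, zero_mul] at hfx
      exact hfx rfl)]
  refine Finset.sum_nbij' (fun d => Nat.sqrt d) (fun e => e ^ 2) ?_ ?_ ?_ ?_ ?_
  · intro a ha
    rw [Finset.mem_filter, Nat.mem_divisors] at ha ⊢
    obtain ⟨⟨hdvd, hn0⟩, c, rfl⟩ := ha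
    simp only [← pow_two, Nat.sqrt_eq']
    rw [← pow_two] at hdvd
    exact ⟨⟨dvd_trans (dvd_pow_self c two_ne_zero) hdvd, hn0⟩, hdvd⟩
  · intro a ha
    rw [Finset.mem_filter, Nat.mem_divisors] at ha ⊢
    exact ⟨⟨ha.2, ha.1.2⟩, ⟨a, (pow_two a)⟩⟩
  · intro a ha
    rw [Finset.mem_filter] at ha
    obtain ⟨-, c, rfl⟩ := ha
    simp only [← pow_two, Nat.sqrt_eq']
  · intro a _
    simp only [Nat.sqrt_eq']
  · intro a ha
    rw [Finset.mem_filter] at ha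
    obtain ⟨-, c, hc⟩ := ha
    have h1 : a = (Nat.sqrt a) ^ 2 := by rw [hc, ← pow_two, Nat.sqrt_eq', pow_two]
    calc sqmu a * ((ζ * ζ * ζ * ζ : ArithmeticFunction ℕ) (n / a) : ℤ)
        = sqmu ((Nat.sqrt a) ^ 2) *
            ((ζ * ζ * ζ * ζ : ArithmeticFunction ℕ) (n / (Nat.sqrt a) ^ 2) : ℤ) := by rw [← h1]
      _ = _ := by rw [sqmu_sq]
end

section
/- The function r(n)/4, where r(n) = #{(k,l) ∈ ℤ² : k² + l² = n}, is multiplicative, and equals the Dirichlet convolution of χ₄ and the constant function 1, i.e., r(n)/4 = Σ_{d ∣ n} χ₄(d), where χ₄ is the nonprincipal character modulo 4. -/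
/-- `r(n) = #{(k,l) ∈ ℤ² : k² + l² = n}`, the number of representations of `n`
as an ordered sum of two squares (with signs). -/
noncomputable def sumTwoSquaresReps (n : ℕ) : ℕ :=
  ((Finset.Icc (-(n : ℤ)) (n : ℤ) ×ˢ Finset.Icc (-(n : ℤ)) (n : ℤ)).filter
    (fun p => p.1 ^ 2 + p.2 ^ 2 = (n : ℤ))).card

open Zsqrtd GaussianInt Finset

namespace TwoSq


noncomputable def S (n : ℕ) : Finset GaussianInt :=
  ((Finset.Icc (-(n : ℤ)) (n : ℤ) ×ˢ Finset.Icc (-(n : ℤ)) (n : ℤ)).filter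
    (fun p => p.1 ^ 2 + p.2 ^ 2 = (n : ℤ))).image (fun p => ⟨p.1, p.2⟩)

lemma norm_eq (z : GaussianInt) : z.norm = z.re^2 + z.im^2 := by simp [Zsqrtd.norm]; ring

lemma mem_S {n : ℕ} {z : GaussianInt} : z ∈ S n ↔ z.norm = (n : ℤ) := by
  simp only [S, Finset.mem_image, Finset.mem_filter, Finset.mem_product, Finset.mem_Icc]
  constructor
  · rintro ⟨⟨a, b⟩, ⟨_, h⟩, rfl⟩
    simpa [norm_eq] using h
  · intro h
    refine ⟨(z.re, z.im), ⟨⟨⟨?_, ?_⟩, ?_, ?_⟩, ?_⟩, rfl⟩ <;>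
      [skip; skip; skip; skip; simpa [norm_eq] using h] <;>
    · have h1 : z.re^2 + z.im^2 = (n:ℤ) := by rw [← norm_eq]; exact h
      nlinarith [sq_nonneg z.re, sq_nonneg z.im, sq_nonneg (z.re - 1), sq_nonneg (z.re + 1),
        sq_nonneg (z.im - 1), sq_nonneg (z.im + 1)]

lemma card_S (n : ℕ) : (S n).card = sumTwoSquaresReps n := by
  rw [S, Finset.card_image_of_injective _ (fun p q h => by
    obtain ⟨h1, h2⟩ := Zsqrtd.ext_iff.mp h; exact Prod.ext h1 h2)]
  rfl

def Q0 (z : GaussianInt) : Prop := 0 < z.re ∧ 0 ≤ z.im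

instance : DecidablePred Q0 := fun _ => instDecidableAnd

noncomputable def S0 (n : ℕ) : Finset GaussianInt := (S n).filter Q0

def rot (z : GaussianInt) : GaussianInt := ⟨-z.im, z.re⟩

def rot' (z : GaussianInt) : GaussianInt := ⟨z.im, -z.re⟩

@[simp] lemma rot_re (z : GaussianInt) : (rot z).re = -z.im := rfl
@[simp] lemma rot_im (z : GaussianInt) : (rot z).im = z.re := rfl
@[simp] lemma rot'_re (z : GaussianInt) : (rot' z).re = z.im := rfl
@[simp] lemma rot'_im (z : GaussianInt) : (rot' z).im = -z.re := rfl

lemma norm_rot' (z : GaussianInt) : (rot' z).norm = z.norm := by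
  rw [norm_eq, norm_eq, rot'_re, rot'_im]; ring

lemma rot_eq (z : GaussianInt) : rot z = ⟨0,1⟩ * z := by
  ext <;> simp [rot, Zsqrtd.re_mul, Zsqrtd.im_mul]

lemma norm_rot (z : GaussianInt) : (rot z).norm = z.norm := by simp [norm_eq, rot]; ring

lemma card_S_eq (n : ℕ) (hn : 0 < n) : (S n).card = 4 * (S0 n).card := by
  classical
  have hne : ∀ z ∈ S n, z ≠ 0 := by
    intro z hz h0
    rw [mem_S, h0] at hz
    simp at hz; omega
  set Q1 : GaussianInt → Prop := fun z => z.re ≤ 0 ∧ 0 < z.im with hQ1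
  set Q2 : GaussianInt → Prop := fun z => z.re < 0 ∧ z.im ≤ 0 with hQ2
  set Q3 : GaussianInt → Prop := fun z => 0 ≤ z.re ∧ z.im < 0 with hQ3
  have hsplit : S n = (S n).filter Q0 ∪ ((S n).filter Q1 ∪ ((S n).filter Q2 ∪ (S n).filter Q3)) := by
    rw [← Finset.filter_or, ← Finset.filter_or, ← Finset.filter_or]
    refine (Finset.filter_true_of_mem ?_).symm
    intro z hz
    have := hne z hz
    have hz0 : z.re ≠ 0 ∨ z.im ≠ 0 := by
      by_contra h; push_neg at h; exact this (Zsqrtd.ext h.1 h.2)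
    simp only [Q0, hQ1, hQ2, hQ3]
    omega
  have d01 : Disjoint ((S n).filter Q0) ((S n).filter Q1) := by
    apply Finset.disjoint_filter_filter'
    rw [_root_.disjoint_iff]; ext z; simp [Q0, hQ1]; intro h; omega
  have d02 : Disjoint ((S n).filter Q0) ((S n).filter Q2) := by
    apply Finset.disjoint_filter_filter'
    rw [_root_.disjoint_iff]; ext z; simp [Q0, hQ2]; intro h; omega
  have d03 : Disjoint ((S n).filter Q0) ((S n).filter Q3) := by
    apply Finset.disjoint_filter_filter'
    rw [_root_.disjoint_iff]; ext z; simp [Q0, hQ3]; intro h; omega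
  have d12 : Disjoint ((S n).filter Q1) ((S n).filter Q2) := by
    apply Finset.disjoint_filter_filter'
    rw [_root_.disjoint_iff]; ext z; simp [hQ1, hQ2]; intro h; omega
  have d13 : Disjoint ((S n).filter Q1) ((S n).filter Q3) := by
    apply Finset.disjoint_filter_filter'
    rw [_root_.disjoint_iff]; ext z; simp [hQ1, hQ3]; intro h; omega
  have d23 : Disjoint ((S n).filter Q2) ((S n).filter Q3) := by
    apply Finset.disjoint_filter_filter'
    rw [_root_.disjoint_iff]; ext z; simp [hQ2, hQ3]; intro h; omega
  have c1 : ((S n).filter Q1).card = (S0 n).card := by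
    apply Finset.card_nbij' rot' rot
    · intro z hz
      simp only [Finset.mem_coe, Finset.mem_filter, S0] at hz ⊢
      refine ⟨mem_S.mpr (by rw [norm_rot']; exact mem_S.mp hz.1), ?_⟩
      obtain ⟨h1, h2⟩ := hz.2
      exact ⟨by simp; omega, by simp; omega⟩
    · intro z hz
      simp only [Finset.mem_coe, Finset.mem_filter, S0] at hz ⊢
      refine ⟨mem_S.mpr (by rw [norm_rot]; exact mem_S.mp hz.1), ?_⟩
      obtain ⟨h1, h2⟩ := hz.2
      exact ⟨by simp; omega, by simp; omega⟩
    · intro z _; ext <;> simp [rot, rot']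
    · intro z _; ext <;> simp [rot, rot']
  have c2 : ((S n).filter Q2).card = (S0 n).card := by
    apply Finset.card_nbij' (fun z => -z) (fun z => -z)
    · intro z hz
      simp only [Finset.mem_coe, Finset.mem_filter, S0] at hz ⊢
      refine ⟨mem_S.mpr (by rw [Zsqrtd.norm_neg]; exact mem_S.mp hz.1), ?_⟩
      obtain ⟨h1, h2⟩ := hz.2; exact ⟨by simp; omega, by simp; omega⟩
    · intro z hz
      simp only [Finset.mem_coe, Finset.mem_filter, S0] at hz ⊢
      refine ⟨mem_S.mpr (by rw [Zsqrtd.norm_neg]; exact mem_S.mp hz.1), ?_⟩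
      obtain ⟨h1, h2⟩ := hz.2; exact ⟨by simp; omega, by simp; omega⟩
    · intro z _; simp
    · intro z _; simp
  have c3 : ((S n).filter Q3).card = (S0 n).card := by
    apply Finset.card_nbij' rot rot'
    · intro z hz
      simp only [Finset.mem_coe, Finset.mem_filter, S0] at hz ⊢
      refine ⟨mem_S.mpr (by rw [norm_rot]; exact mem_S.mp hz.1), ?_⟩
      obtain ⟨h1, h2⟩ := hz.2
      exact ⟨by simp; omega, by simp; omega⟩
    · intro z hz
      simp only [Finset.mem_coe, Finset.mem_filter, S0] at hz ⊢
      refine ⟨mem_S.mpr (by rw [norm_rot']; exact mem_S.mp hz.1), ?_⟩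
      obtain ⟨h1, h2⟩ := hz.2
      exact ⟨by simp; omega, by simp; omega⟩
    · intro z _; ext <;> simp [rot, rot']
    · intro z _; ext <;> simp [rot, rot']
  rw [hsplit, Finset.card_union_of_disjoint, Finset.card_union_of_disjoint,
    Finset.card_union_of_disjoint d23, c1, c2, c3]
  · show (S0 n).card + ((S0 n).card + ((S0 n).card + (S0 n).card)) = 4 * (S0 n).card; ring
  · exact Finset.disjoint_union_right.mpr ⟨d12, d13⟩
  · exact Finset.disjoint_union_right.mpr ⟨d01, Finset.disjoint_union_right.mpr ⟨d02, d03⟩⟩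



/-- orbit relation under multiplication by units -/
def Orb (z w : GaussianInt) : Prop := w = z ∨ w = rot z ∨ w = rot (rot z) ∨ w = rot (rot (rot z))

instance : ∀ z w, Decidable (Orb z w) := fun _ _ => inferInstanceAs (Decidable (_ ∨ _))

lemma rot_rot_rot_rot (z : GaussianInt) : rot (rot (rot (rot z))) = z := by
  ext <;> simp

lemma orb_refl (z : GaussianInt) : Orb z z := Or.inl rfl

lemma orb_rot (z : GaussianInt) : Orb z (rot z) := Or.inr (Or.inl rfl)

lemma orb_symm {z w : GaussianInt} (h : Orb z w) : Orb w z := by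
  rcases h with rfl | rfl | rfl | rfl <;> simp [Orb, rot_rot_rot_rot]

lemma orb_trans {z w v : GaussianInt} (h1 : Orb z w) (h2 : Orb w v) : Orb z v := by
  unfold Orb at *
  rcases h1 with h | h | h | h <;> subst h <;>
    rcases h2 with h | h | h | h <;> subst h <;>
    simp [rot_rot_rot_rot, Orb]

lemma norm_orb {z w : GaussianInt} (h : Orb z w) : w.norm = z.norm := by
  rcases h with h | h | h | h <;> subst h <;> simp [norm_rot]

lemma rot_mul (z w : GaussianInt) : rot (z * w) = rot z * w := by
  ext <;> simp [Zsqrtd.re_mul, Zsqrtd.im_mul] <;> ring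

lemma orb_mul {z w v : GaussianInt} (h : Orb z w) : Orb (z * v) (w * v) := by
  rcases h with h | h | h | h <;> subst h <;> simp [Orb, rot_mul]

/-- every unit is in the orbit of 1, i.e. orbit of z under units = Orb -/
lemma orb_of_unit {u : GaussianInt} (h : IsUnit u) : Orb 1 u := by
  have hn : u.norm = 1 := (Zsqrtd.norm_eq_one_iff' (by norm_num) u).mpr h
  obtain ⟨a, b⟩ := u
  rw [norm_eq] at hn
  simp only at hn
  have hr1 : a ≤ 1 := by nlinarith [sq_nonneg b, sq_nonneg (a - 1)]
  have hr2 : -1 ≤ a := by nlinarith [sq_nonneg b, sq_nonneg (a + 1)]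
  have hi1 : b ≤ 1 := by nlinarith [sq_nonneg a, sq_nonneg (b - 1)]
  have hi2 : -1 ≤ b := by nlinarith [sq_nonneg a, sq_nonneg (b + 1)]
  unfold Orb rot
  simp only [Zsqrtd.ext_iff, Zsqrtd.re_one, Zsqrtd.im_one]
  interval_cases a <;> interval_cases b <;> simp_all

lemma orb_of_associated {z w : GaussianInt} (h : Associated z w) : Orb z w := by
  obtain ⟨u, hu⟩ := h
  have h1 := orb_mul (v := z) (orb_of_unit u.isUnit)
  rw [one_mul] at h1
  have h2 : (u : GaussianInt) * z = w := by rw [mul_comm]; exact hu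
  rwa [h2] at h1

/-- uniqueness: two elements of the same orbit in Q0 are equal -/
lemma orb_q0_unique {z w : GaussianInt} (h : Orb z w) (h1 : Q0 z) (h2 : Q0 w) : z = w := by
  obtain ⟨a1, b1⟩ := h1
  obtain ⟨a2, b2⟩ := h2
  rcases h with h | h | h | h <;> subst h
  · rfl
  all_goals (exfalso; simp at a2 b2; omega)

/-- existence: every nonzero z has an orbit element in Q0 -/
lemma orb_q0_exists {z : GaussianInt} (h : z ≠ 0) : ∃ w, Orb z w ∧ Q0 w := by
  have h0 : z.re ≠ 0 ∨ z.im ≠ 0 := by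
    by_contra hc; push_neg at hc; exact h (Zsqrtd.ext hc.1 hc.2)
  by_cases h1 : 0 < z.re ∧ 0 ≤ z.im
  · exact ⟨z, orb_refl z, h1⟩
  by_cases h2 : 0 < (rot z).re ∧ 0 ≤ (rot z).im
  · exact ⟨rot z, orb_rot z, h2⟩
  by_cases h3 : 0 < (rot (rot z)).re ∧ 0 ≤ (rot (rot z)).im
  · exact ⟨rot (rot z), Or.inr (Or.inr (Or.inl rfl)), h3⟩
  refine ⟨rot (rot (rot z)), Or.inr (Or.inr (Or.inr rfl)), ?_⟩
  unfold Q0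
  simp at h2 h3 ⊢
  constructor <;> omega

noncomputable def canon (z : GaussianInt) : GaussianInt :=
  if h : z ≠ 0 then Classical.choose (orb_q0_exists h) else 0

lemma canon_orb {z : GaussianInt} (h : z ≠ 0) : Orb z (canon z) := by
  rw [canon, dif_pos h]; exact (Classical.choose_spec (orb_q0_exists h)).1

lemma canon_q0 {z : GaussianInt} (h : z ≠ 0) : Q0 (canon z) := by
  rw [canon, dif_pos h]; exact (Classical.choose_spec (orb_q0_exists h)).2

lemma canon_eq_of {z w : GaussianInt} (h : z ≠ 0) (ho : Orb z w) (hq : Q0 w) : canon z = w :=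
  orb_q0_unique (orb_trans (orb_symm (canon_orb h)) ho) (canon_q0 h) hq

lemma canon_eq_self {z : GaussianInt} (h : z ≠ 0) (hq : Q0 z) : canon z = z :=
  canon_eq_of h (orb_refl z) hq

lemma canon_congr {z w : GaussianInt} (h : z ≠ 0) (ho : Orb z w) : canon z = canon w := by
  have hw : w ≠ 0 := by
    intro h0; subst h0
    have hn := norm_orb ho
    rw [Zsqrtd.norm_zero] at hn
    exact h (GaussianInt.norm_eq_zero.mp hn.symm)
  exact canon_eq_of h (orb_trans ho (canon_orb hw)) (canon_q0 hw)

lemma canon_norm {z : GaussianInt} (h : z ≠ 0) : (canon z).norm = z.norm :=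
  norm_orb (canon_orb h)

lemma canon_ne_zero {z : GaussianInt} (h : z ≠ 0) : canon z ≠ 0 := by
  intro h0
  have h1 := canon_norm h
  rw [h0, Zsqrtd.norm_zero] at h1
  exact h (GaussianInt.norm_eq_zero.mp h1.symm)


set_option synthInstance.maxHeartbeats 1000000 in
lemma prime_of_prime_norm {z : GaussianInt} (h : (z.norm).natAbs.Prime) : Prime z := by
  rw [← irreducible_iff_prime]
  constructor
  · rw [← Zsqrtd.norm_eq_one_iff]
    exact fun h1 => h.ne_one h1
  · intro a b hab
    have h1 : z.norm = a.norm * b.norm := by rw [hab, Zsqrtd.norm_mul]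
    have h2 : (z.norm).natAbs = a.norm.natAbs * b.norm.natAbs := by
      rw [h1, Int.natAbs_mul]
    rw [h2] at h
    rcases Nat.prime_mul_iff.mp h with ⟨_, h3⟩ | ⟨_, h3⟩
    · exact Or.inr (Zsqrtd.norm_eq_one_iff.mp h3)
    · exact Or.inl (Zsqrtd.norm_eq_one_iff.mp h3)

lemma exists_norm_prime {p : ℕ} (hp : p.Prime) (hp3 : p % 4 ≠ 3) :
    ∃ π : GaussianInt, π.norm = (p : ℤ) := by
  rcases eq_or_ne p 2 with rfl | hp2
  · exact ⟨⟨1, 1⟩, by rw [norm_eq]; norm_num⟩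
  · haveI : Fact p.Prime := ⟨hp⟩
    obtain ⟨a, b, hab⟩ := Nat.Prime.sq_add_sq hp3
    exact ⟨⟨a, b⟩, by rw [norm_eq]; push_cast [← hab]; ring⟩

lemma star_dvd {z w : GaussianInt} (h : z ∣ star w) : star z ∣ w := by
  obtain ⟨c, hc⟩ := h
  exact ⟨star c, by rw [← star_star w, hc, star_mul, mul_comm]⟩

lemma dvd_of_norm_dvd {π z : GaussianInt} (hπ : Prime π) (h : (π.norm : GaussianInt) ∣ (z.norm : GaussianInt)) :
    π ∣ z ∨ star π ∣ z := by
  have h1 : π ∣ z * star z := by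
    have ha : π ∣ (π.norm : GaussianInt) := ⟨star π, Zsqrtd.norm_eq_mul_conj π⟩
    have hb := ha.trans h
    rwa [Zsqrtd.norm_eq_mul_conj] at hb
  rcases hπ.2.2 z (star z) h1 with h2 | h2
  · exact Or.inl h2
  · exact Or.inr (star_dvd h2)

/-- Key splitting lemma -/
lemma split : ∀ m : ℕ, ∀ n : ℕ, ∀ z : GaussianInt, Nat.Coprime m n → z.norm = (m * n : ℕ) →
    ∃ a b : GaussianInt, z = a * b ∧ a.norm = (m : ℤ) ∧ b.norm = (n : ℤ) := by
  intro m
  induction m using Nat.strong_induction_on with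
  | _ m ih =>
    intro n z hco hz
    rcases Nat.eq_zero_or_pos m with rfl | hm0
    · have hn1 : n = 1 := by simpa using hco
      subst hn1
      exact ⟨z, 1, by rw [mul_one], by simpa using hz, by simp⟩
    rcases Nat.eq_or_lt_of_le hm0 with hm1 | hm2
    · refine ⟨1, z, by rw [one_mul], by simp [← hm1], by rw [hz, ← hm1]; push_cast; ring⟩
    -- m ≥ 2
    set p := m.minFac with hp
    have hpp : p.Prime := Nat.minFac_prime (by omega)
    have hpm : p ∣ m := Nat.minFac_dvd m
    have hpn : ¬ (p ∣ n) := fun hd => Nat.Prime.one_lt hpp |>.ne'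
      (Nat.eq_one_of_dvd_coprimes hco hpm hd ▸ rfl)
    by_cases hp3 : p % 4 = 3
    · -- p is prime in ℤ[i]
      haveI : Fact p.Prime := ⟨hpp⟩
      have hπ : Prime (p : GaussianInt) := GaussianInt.prime_of_nat_prime_of_mod_four_eq_three p hp3
      have hdvd : (p : GaussianInt) ∣ z := by
        have h1 : (p : GaussianInt) ∣ z * star z := by
          rw [← Zsqrtd.norm_eq_mul_conj, hz]
          obtain ⟨k2, hk2⟩ : p ∣ m * n := Dvd.dvd.mul_right hpm n
          exact ⟨(k2 : GaussianInt), by rw [hk2]; push_cast; ring⟩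
        rcases hπ.2.2 z (star z) h1 with h2 | h2
        · exact h2
        · simpa using star_dvd h2
      obtain ⟨z1, hz1⟩ := hdvd
      -- norm z1 * p^2 = m*n
      have hnz1 : (p:ℤ)^2 * z1.norm = (m*n : ℕ) := by
        rw [← hz, hz1, Zsqrtd.norm_mul, Zsqrtd.norm_natCast]; push_cast; ring
      -- p^2 ∣ m in ℕ
      obtain ⟨m1, hm1'⟩ := hpm
      have hpm1 : p ∣ m1 := by
        have h4 : (p:ℤ) ∣ (m1 * n : ℕ) := by
          have : (p:ℤ) * (m1 * n : ℕ) = (p:ℤ)^2 * z1.norm := by rw [hnz1]; push_cast [hm1']; ring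
          exact ⟨z1.norm, by nlinarith [this]⟩
        have := Int.ofNat_dvd.mp (by exact_mod_cast h4)
        rcases (Nat.Prime.dvd_mul hpp).mp this with h5 | h5
        · exact h5
        · exact absurd h5 hpn
      obtain ⟨m2, hm2'⟩ := hpm1
      have hmfact : m = p^2 * m2 := by rw [hm1', hm2']; ring
      have hnorm_z1 : z1.norm = ((m2 * n : ℕ) : ℤ) := by
        have hp0 : (0:ℤ) < (p:ℤ) := by exact_mod_cast hpp.pos
        have := hnz1
        rw [hmfact] at this
        push_cast at this ⊢
        nlinarith [this]
      have hm2pos : 0 < m2 := by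
        rcases Nat.eq_zero_or_pos m2 with h0 | h0
        · subst h0; rw [hmfact] at hm2; simp at hm2
        · exact h0
      have hm2m : m2 < m := by
        rw [hmfact]
        have : 1 < p ^ 2 := by nlinarith [hpp.two_le]
        nlinarith
      obtain ⟨a, b, hab, hna, hnb⟩ := ih m2 hm2m n z1 (Nat.Coprime.coprime_dvd_left ⟨p^2, by rw [hmfact]; ring⟩ hco) hnorm_z1
      refine ⟨(p : GaussianInt) * a, b, by rw [hz1, hab]; ring, ?_, hnb⟩
      rw [Zsqrtd.norm_mul, Zsqrtd.norm_natCast, hna, hmfact]; push_cast; ring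
    · -- p splits: ∃ π with norm p
      obtain ⟨π, hπn⟩ := exists_norm_prime hpp hp3
      have hπ : Prime π := prime_of_prime_norm (by rw [hπn]; simpa using hpp)
      have hdvd : π ∣ z ∨ star π ∣ z := by
        apply dvd_of_norm_dvd hπ
        rw [hπn, hz]
        obtain ⟨k2, hk2⟩ : p ∣ m * n := Dvd.dvd.mul_right hpm n
        exact ⟨(k2 : GaussianInt), by rw [hk2]; push_cast; ring⟩
      have : ∃ π' : GaussianInt, π'.norm = (p : ℤ) ∧ π' ∣ z := by
        rcases hdvd with h2 | h2
        · exact ⟨π, hπn, h2⟩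
        · exact ⟨star π, by rw [Zsqrtd.norm_conj, hπn], h2⟩
      obtain ⟨π', hπ'n, ⟨z1, hz1⟩⟩ := this
      obtain ⟨m1, hm1'⟩ := hpm
      have hnorm_z1 : z1.norm = ((m1 * n : ℕ) : ℤ) := by
        have hp0 : (0:ℤ) < (p:ℤ) := by exact_mod_cast hpp.pos
        have h6 : (p:ℤ) * z1.norm = ((m * n : ℕ) : ℤ) := by
          rw [← hz, hz1, Zsqrtd.norm_mul, hπ'n]
        rw [hm1'] at h6
        push_cast at h6 ⊢
        nlinarith [h6]
      have hm1pos : 0 < m1 := by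
        rcases Nat.eq_zero_or_pos m1 with h0 | h0
        · subst h0; rw [hm1'] at hm2; simp at hm2
        · exact h0
      have hm1m : m1 < m := by
        rw [hm1']
        nlinarith [hpp.two_le]
      obtain ⟨a, b, hab, hna, hnb⟩ := ih m1 hm1m n z1 (Nat.Coprime.coprime_dvd_left ⟨p, by rw [hm1']; ring⟩ hco) hnorm_z1
      refine ⟨π' * a, b, by rw [hz1, hab]; ring, ?_, hnb⟩
      rw [Zsqrtd.norm_mul, hπ'n, hna, hm1']; push_cast; ring


lemma mem_S0 {n : ℕ} {z : GaussianInt} : z ∈ S0 n ↔ z.norm = (n : ℤ) ∧ Q0 z := by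
  simp [S0, Finset.mem_filter, mem_S]

lemma ne_zero_of_mem_S0 {n : ℕ} (hn : 0 < n) {z : GaussianInt} (h : z ∈ S0 n) : z ≠ 0 := by
  intro h0
  rw [mem_S0, h0, Zsqrtd.norm_zero] at h
  have h1 := h.1
  have : (0:ℤ) < (n:ℤ) := by exact_mod_cast hn
  omega

lemma norm_dvd_norm {a b : GaussianInt} (h : a ∣ b) : a.norm ∣ b.norm := by
  obtain ⟨c, rfl⟩ := h
  rw [Zsqrtd.norm_mul]
  exact Dvd.intro _ rfl

lemma isCoprime_of_norm_coprime {a b : GaussianInt}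
    (h : Nat.Coprime a.norm.natAbs b.norm.natAbs) : IsCoprime a b := by
  classical
  rw [← EuclideanDomain.gcd_isUnit_iff]
  have h1 : EuclideanDomain.gcd a b ∣ a := EuclideanDomain.gcd_dvd_left a b
  have h2 : EuclideanDomain.gcd a b ∣ b := EuclideanDomain.gcd_dvd_right a b
  have h3 : (EuclideanDomain.gcd a b).norm.natAbs ∣ Nat.gcd a.norm.natAbs b.norm.natAbs :=
    Nat.dvd_gcd (Int.natAbs_dvd_natAbs.mpr (norm_dvd_norm h1))
      (Int.natAbs_dvd_natAbs.mpr (norm_dvd_norm h2))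
  rw [Nat.Coprime] at h
  rw [h] at h3
  exact Zsqrtd.norm_eq_one_iff.mp (Nat.dvd_one.mp h3)

lemma isUnit_i : IsUnit (⟨0,1⟩ : GaussianInt) :=
  IsUnit.of_mul_eq_one ⟨0,-1⟩ (by ext <;> simp [Zsqrtd.re_mul, Zsqrtd.im_mul])

lemma associated_rot (z : GaussianInt) : Associated z (rot z) := by
  rw [rot_eq]
  exact ⟨isUnit_i.unit, by rw [IsUnit.unit_spec, mul_comm]⟩

lemma associated_of_orb {z w : GaussianInt} (h : Orb z w) : Associated z w := by
  rcases h with rfl | rfl | rfl | rfl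
  · rfl
  · exact associated_rot z
  · exact (associated_rot z).trans (associated_rot _)
  · exact ((associated_rot z).trans (associated_rot _)).trans (associated_rot _)

lemma orb_of_canon_eq {x y : GaussianInt} (hx : x ≠ 0) (hy : y ≠ 0)
    (h : canon x = canon y) : Orb x y :=
  orb_trans (h ▸ canon_orb hx) (orb_symm (canon_orb hy))

lemma natAbs_norm_of_mem {n : ℕ} {z : GaussianInt} (h : z ∈ S0 n) : z.norm.natAbs = n := by
  rw [(mem_S0.mp h).1]
  exact Int.natAbs_natCast n

lemma card_S0_mul {m n : ℕ} (hm : 0 < m) (hn : 0 < n) (hco : Nat.Coprime m n) :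
    (S0 (m * n)).card = (S0 m).card * (S0 n).card := by
  classical
  rw [← Finset.card_product]
  symm
  apply Finset.card_bij (fun p _ => canon (p.1 * p.2))
  · rintro ⟨a, b⟩ hp
    rw [Finset.mem_product] at hp
    obtain ⟨ha, hb⟩ := hp
    have hane : a ≠ 0 := ne_zero_of_mem_S0 hm ha
    have hbne : b ≠ 0 := ne_zero_of_mem_S0 hn hb
    have hab : a * b ≠ 0 := mul_ne_zero hane hbne
    rw [mem_S0]
    refine ⟨?_, canon_q0 hab⟩
    rw [canon_norm hab, Zsqrtd.norm_mul, (mem_S0.mp ha).1, (mem_S0.mp hb).1]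
    push_cast; ring
  · rintro ⟨a, b⟩ hp ⟨c, d⟩ hq h
    rw [Finset.mem_product] at hp hq
    obtain ⟨ha, hb⟩ := hp
    obtain ⟨hc, hd⟩ := hq
    have hane : a ≠ 0 := ne_zero_of_mem_S0 hm ha
    have hbne : b ≠ 0 := ne_zero_of_mem_S0 hn hb
    have hcne : c ≠ 0 := ne_zero_of_mem_S0 hm hc
    have hdne : d ≠ 0 := ne_zero_of_mem_S0 hn hd
    simp only at h
    have horb : Orb (a * b) (c * d) :=
      orb_of_canon_eq (mul_ne_zero hane hbne) (mul_ne_zero hcne hdne) h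
    have hassoc : Associated (a * b) (c * d) := associated_of_orb horb
    have hcop_ad : IsCoprime a d := isCoprime_of_norm_coprime (by
      rw [natAbs_norm_of_mem ha, natAbs_norm_of_mem hd]; exact hco)
    have hcop_cb : IsCoprime c b := isCoprime_of_norm_coprime (by
      rw [natAbs_norm_of_mem hc, natAbs_norm_of_mem hb]; exact hco)
    have h1 : a ∣ c := hcop_ad.dvd_of_dvd_mul_right ((dvd_mul_right a b).trans hassoc.dvd)
    have h2 : c ∣ a := hcop_cb.dvd_of_dvd_mul_right ((dvd_mul_right c d).trans hassoc.symm.dvd)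
    have hac : a = c := orb_q0_unique (orb_of_associated (associated_of_dvd_dvd h1 h2))
      (mem_S0.mp ha).2 (mem_S0.mp hc).2
    subst hac
    obtain ⟨u, hu⟩ := hassoc
    have hbd' : b * u = d := by
      apply mul_left_cancel₀ hane
      rw [← mul_assoc, hu]
    have hbd : b = d := orb_q0_unique (orb_of_associated ⟨u, hbd'⟩)
      (mem_S0.mp hb).2 (mem_S0.mp hd).2
    rw [hbd]
  · intro z hz
    have hz' := mem_S0.mp hz
    obtain ⟨a, b, hzab, hna, hnb⟩ := split m n z hco hz'.1
    have hane : a ≠ 0 := by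
      intro h0; rw [h0, Zsqrtd.norm_zero] at hna; omega
    have hbne : b ≠ 0 := by
      intro h0; rw [h0, Zsqrtd.norm_zero] at hnb; omega
    refine ⟨(canon a, canon b), Finset.mem_product.mpr
      ⟨mem_S0.mpr ⟨by rw [canon_norm hane, hna], canon_q0 hane⟩,
       mem_S0.mpr ⟨by rw [canon_norm hbne, hnb], canon_q0 hbne⟩⟩, ?_⟩
    simp only
    have horb : Orb (a * b) (canon a * canon b) := by
      refine orb_trans (orb_mul (canon_orb hane) (v := b)) ?_
      have h5 := orb_mul (canon_orb hbne) (v := canon a)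
      rwa [mul_comm b, mul_comm (canon b)] at h5
    rw [← canon_congr (mul_ne_zero hane hbne) horb, ← hzab, canon_eq_self _ hz'.2]
    intro h0
    rw [h0, Zsqrtd.norm_zero] at hz'
    have h6 := hz'.1
    have h7 : 0 < m * n := Nat.mul_pos hm hn
    have : (0:ℤ) < ((m*n : ℕ) : ℤ) := by exact_mod_cast h7
    omega


lemma norm_pow (z : GaussianInt) (k : ℕ) : (z^k).norm = z.norm ^ k := by
  induction k with
  | zero => simp
  | succ k ih => rw [pow_succ, Zsqrtd.norm_mul, ih, pow_succ]

lemma pow_rep_three {p : ℕ} (hpp : p.Prime) (hp3 : p % 4 = 3) :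
    ∀ k : ℕ, ∀ z : GaussianInt, z.norm = ((p^k : ℕ) : ℤ) →
      ∃ j, k = 2*j ∧ Orb ((p^j : ℕ) : GaussianInt) z := by
  intro k
  induction k using Nat.strong_induction_on with
  | _ k ih =>
    intro z hz
    rcases Nat.eq_zero_or_pos k with rfl | hk
    · refine ⟨0, rfl, ?_⟩
      have hu : IsUnit z := Zsqrtd.norm_eq_one_iff.mp (by rw [hz]; simp)
      simpa using orb_of_unit hu
    · haveI : Fact p.Prime := ⟨hpp⟩
      have hπ : Prime (p : GaussianInt) :=
        GaussianInt.prime_of_nat_prime_of_mod_four_eq_three p hp3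
      have hp2 := hpp.two_le
      have hdvd : (p : GaussianInt) ∣ z := by
        have h1 : (p : GaussianInt) ∣ z * star z := by
          rw [← Zsqrtd.norm_eq_mul_conj, hz]
          obtain ⟨c, hc⟩ : p ∣ p ^ k := dvd_pow_self p (by omega)
          exact ⟨(c : GaussianInt), by rw [hc]; push_cast; ring⟩
        rcases hπ.2.2 z (star z) h1 with h2 | h2
        · exact h2
        · simpa using star_dvd h2
      obtain ⟨z1, hz1⟩ := hdvd
      have hnz1 : (p:ℤ)^2 * z1.norm = ((p^k : ℕ) : ℤ) := by
        rw [← hz, hz1, Zsqrtd.norm_mul, Zsqrtd.norm_natCast]; push_cast; ring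
      have hzn1 : 0 ≤ z1.norm := GaussianInt.norm_nonneg z1
      have hk2 : 2 ≤ k := by
        by_contra hlt
        have hk1 : k = 1 := by omega
        subst hk1
        have hp2' : (2:ℤ) ≤ (p:ℤ) := by exact_mod_cast hp2
        push_cast at hnz1
        rcases eq_or_lt_of_le hzn1 with h0 | h0
        · rw [← h0, mul_zero] at hnz1
          nlinarith
        · nlinarith [hnz1, hp2', h0]
      have hnz1' : z1.norm = ((p^(k-2) : ℕ) : ℤ) := by
        have hpz : ((p:ℤ))^2 ≠ 0 := by
          have : (0:ℤ) < (p:ℤ) := by exact_mod_cast hpp.pos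
          positivity
        apply mul_left_cancel₀ hpz
        rw [hnz1]
        push_cast
        rw [← pow_add]
        congr 1
        omega
      obtain ⟨j1, hj1, horb⟩ := ih (k-2) (by omega) z1 hnz1'
      refine ⟨j1 + 1, by omega, ?_⟩
      have h5 := orb_mul (v := (p : GaussianInt)) horb
      have e1 : ((p^(j1+1) : ℕ) : GaussianInt) = ((p^j1 : ℕ) : GaussianInt) * (p : GaussianInt) := by
        push_cast; ring
      have e2 : z = z1 * (p : GaussianInt) := by rw [hz1]; ring
      rw [e1, e2]
      exact h5

lemma pow_rep_split {p : ℕ} (hpp : p.Prime) {π : GaussianInt} (hπ : Prime π)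
    (hπn : π.norm = (p : ℤ)) :
    ∀ k : ℕ, ∀ z : GaussianInt, z.norm = ((p^k : ℕ) : ℤ) →
      ∃ a b : ℕ, a + b = k ∧ Orb (π^a * (star π)^b) z := by
  intro k
  induction k with
  | zero =>
    intro z hz
    refine ⟨0, 0, rfl, ?_⟩
    have hu : IsUnit z := Zsqrtd.norm_eq_one_iff.mp (by rw [hz]; simp)
    simpa using orb_of_unit hu
  | succ k ih =>
    intro z hz
    have hpz : (0:ℤ) < (p:ℤ) := by exact_mod_cast hpp.pos
    have hdvd : π ∣ z ∨ star π ∣ z := by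
      apply dvd_of_norm_dvd hπ
      rw [hπn, hz]
      obtain ⟨c, hc⟩ : p ∣ p ^ (k+1) := dvd_pow_self p (by omega)
      exact ⟨(c : GaussianInt), by rw [hc]; push_cast; ring⟩
    have hstarn : (star π).norm = (p : ℤ) := by rw [Zsqrtd.norm_conj, hπn]
    rcases hdvd with ⟨z1, hz1⟩ | ⟨z1, hz1⟩
    · have hnz1 : z1.norm = ((p^k : ℕ) : ℤ) := by
        apply mul_left_cancel₀ (by positivity : (p:ℤ) ≠ 0)
        rw [← hπn, ← Zsqrtd.norm_mul, ← hz1, hz, hπn]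
        push_cast
        ring
      obtain ⟨a, b, hab, horb⟩ := ih z1 hnz1
      refine ⟨a + 1, b, by omega, ?_⟩
      have h5 := orb_mul (v := π) horb
      have e1 : π^(a+1) * (star π)^b = π^a * (star π)^b * π := by ring
      have e2 : z = z1 * π := by rw [hz1]; ring
      rw [e1, e2]
      exact h5
    · have hnz1 : z1.norm = ((p^k : ℕ) : ℤ) := by
        apply mul_left_cancel₀ (by positivity : (p:ℤ) ≠ 0)
        rw [← hstarn, ← Zsqrtd.norm_mul, ← hz1, hz, hstarn]
        push_cast
        ring
      obtain ⟨a, b, hab, horb⟩ := ih z1 hnz1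
      refine ⟨a, b + 1, by omega, ?_⟩
      have h5 := orb_mul (v := star π) horb
      have e1 : π^a * (star π)^(b+1) = π^a * (star π)^b * star π := by ring
      have e2 : z = z1 * star π := by rw [hz1]; ring
      rw [e1, e2]
      exact h5

lemma not_p_eq_sq {p : ℕ} (hpp : p.Prime) (c : ℤ) (h : c^2 = (p:ℤ)) : False := by
  have h2 : c.natAbs * c.natAbs = p := by
    rw [← Int.natAbs_mul, ← sq, h, Int.natAbs_natCast]
  rcases (Nat.Prime.eq_one_or_self_of_dvd hpp c.natAbs ⟨c.natAbs, h2.symm⟩) with h3 | h3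
  · rw [h3] at h2; simp at h2; exact hpp.one_lt.ne' h2.symm
  · rw [h3] at h2
    nlinarith [hpp.two_le]

lemma not_associated_star {p : ℕ} (hpp : p.Prime) (hp1 : p % 4 = 1) {π : GaussianInt}
    (hπn : π.norm = (p : ℤ)) : ¬ Associated π (star π) := by
  intro h
  have horb := orb_of_associated h
  obtain ⟨c, d⟩ := π
  rw [norm_eq] at hπn
  simp only at hπn
  have hstar : star (⟨c, d⟩ : GaussianInt) = ⟨c, -d⟩ := rfl
  rw [hstar] at horb
  have hodd : (p:ℤ) % 4 = 1 := by omega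
  rcases horb with h1 | h1 | h1 | h1 <;>
    rw [Zsqrtd.ext_iff] at h1 <;> simp only [rot_re, rot_im] at h1
  · have hd : d = 0 := by omega
    exact not_p_eq_sq hpp c (by rw [← hπn, hd]; ring)
  · have hc : c = -d := by omega
    have h6 : (p:ℤ) = 2 * d^2 := by rw [← hπn, hc]; ring
    have h7 : (p:ℤ) % 2 = 0 := by omega
    omega
  · have hc : c = 0 := by omega
    exact not_p_eq_sq hpp d (by rw [← hπn, hc]; ring)
  · have hc : c = d := by omega
    have h6 : (p:ℤ) = 2 * d^2 := by rw [← hπn, hc]; ring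
    have h7 : (p:ℤ) % 2 = 0 := by omega
    omega

lemma prime_power_cancel {α β : GaussianInt} (hα : Prime α) (hβ : Prime β)
    (hnass : ¬ Associated α β) {x y' d : ℕ} (hd : 0 < d)
    (hass : Associated (α^x * β^(y'+d)) (α^(x+d) * β^(y'))) : False := by
  obtain ⟨u, hu⟩ := hass
  have hc : α^x * β^(y') ≠ 0 :=
    mul_ne_zero (pow_ne_zero _ hα.ne_zero) (pow_ne_zero _ hβ.ne_zero)
  have key : β^d * u = α^d := by
    apply mul_left_cancel₀ hc
    calc α^x * β^(y') * (β^d * (u : GaussianInt)) = α^x * β^(y'+d) * u := by rw [pow_add]; ring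
    _ = α^(x+d) * β^(y') := hu
    _ = α^x * β^(y') * α^d := by rw [pow_add]; ring
  have hdvd : α ∣ β^d * (u : GaussianInt) := by
    rw [key]
    exact dvd_pow_self α (by omega)
  rcases hα.2.2 _ _ hdvd with h2 | h2
  · have h3 : α ∣ β := hα.dvd_of_dvd_pow h2
    exact hnass (Irreducible.associated_of_dvd hα.irreducible hβ.irreducible h3)
  · exact hα.not_unit (isUnit_of_dvd_unit h2 u.isUnit)

lemma card_S0_two (k : ℕ) : (S0 (2^k)).card = 1 := by
  classical
  have hπn : (⟨1, 1⟩ : GaussianInt).norm = ((2:ℕ) : ℤ) := by rw [norm_eq]; norm_num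
  set π : GaussianInt := ⟨1, 1⟩ with hπdef
  have hπ : Prime π := prime_of_prime_norm (by rw [hπn]; norm_num)
  have hπne : π ≠ 0 := hπ.ne_zero
  have hstar_orb : Orb π (star π) := Or.inr (Or.inr (Or.inr (by rw [Zsqrtd.ext_iff]; exact ⟨rfl, rfl⟩)))
  have hπkne : (π^k) ≠ 0 := pow_ne_zero _ hπne
  have hπknorm : (π^k).norm = ((2^k : ℕ) : ℤ) := by
    rw [norm_pow, hπn]; push_cast; ring
  have hmem : canon (π^k) ∈ S0 (2^k) := mem_S0.mpr ⟨by rw [canon_norm hπkne, hπknorm], canon_q0 hπkne⟩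
  have heq : S0 (2^k) = {canon (π^k)} := by
    apply Finset.eq_singleton_iff_unique_mem.mpr
    refine ⟨hmem, ?_⟩
    intro z hz
    obtain ⟨a, b, hab, horb⟩ := pow_rep_split Nat.prime_two hπ hπn k z (mem_S0.mp hz).1
    have hassoc : Associated (π^k) (π^a * (star π)^b) := by
      have h1 : Associated (π^b) ((star π)^b) := (associated_of_orb hstar_orb).pow_pow
      have h2 : Associated (π^a * π^b) (π^a * (star π)^b) := Associated.mul_left _ h1
      rwa [← pow_add, hab] at h2
    have hzcanon : z = canon (π^a * (star π)^b) :=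
      (canon_eq_of (by
        intro h0
        rw [h0] at horb
        have h9 := norm_orb horb
        rw [Zsqrtd.norm_zero, (mem_S0.mp hz).1] at h9
        have : (0:ℤ) < ((2^k : ℕ) : ℤ) := by positivity
        omega) horb (mem_S0.mp hz).2).symm
    rw [hzcanon]
    exact (canon_congr hπkne (orb_of_associated hassoc)).symm
  rw [heq, Finset.card_singleton]

lemma card_S0_three {p : ℕ} (hpp : p.Prime) (hp3 : p % 4 = 3) (k : ℕ) :
    (S0 (p^k)).card = if k % 2 = 0 then 1 else 0 := by
  classical
  rcases Nat.even_or_odd k with ⟨j, hj⟩ | ⟨j, hj⟩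
  · rw [if_pos (by omega)]
    have hq0 : Q0 ((p^j : ℕ) : GaussianInt) := by
      constructor
      · rw [Zsqrtd.re_natCast]
        exact_mod_cast pow_pos hpp.pos j
      · rw [Zsqrtd.im_natCast]
    have hnorm : (((p^j : ℕ) : GaussianInt)).norm = ((p^k : ℕ) : ℤ) := by
      rw [Zsqrtd.norm_natCast]
      push_cast
      rw [← pow_add]
      congr 1
      omega
    have heq : S0 (p^k) = {((p^j : ℕ) : GaussianInt)} := by
      apply Finset.eq_singleton_iff_unique_mem.mpr
      refine ⟨mem_S0.mpr ⟨hnorm, hq0⟩, ?_⟩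
      intro z hz
      obtain ⟨j', hj', horb⟩ := pow_rep_three hpp hp3 k z (mem_S0.mp hz).1
      have hjj : j' = j := by omega
      subst hjj
      exact (orb_q0_unique horb hq0 (mem_S0.mp hz).2).symm
    rw [heq, Finset.card_singleton]
  · rw [if_neg (by omega)]
    rw [Finset.card_eq_zero]
    by_contra hne
    obtain ⟨z, hz⟩ := Finset.nonempty_of_ne_empty hne
    obtain ⟨j', hj', _⟩ := pow_rep_three hpp hp3 k z (mem_S0.mp hz).1
    omega

lemma card_S0_one_mod_four {p : ℕ} (hpp : p.Prime) (hp1 : p % 4 = 1) (k : ℕ) :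
    (S0 (p^k)).card = k + 1 := by
  classical
  obtain ⟨π, hπn⟩ := exists_norm_prime hpp (by omega)
  have hπ : Prime π := prime_of_prime_norm (by rw [hπn]; simpa using hpp)
  have hπne : π ≠ 0 := hπ.ne_zero
  have hstarn : (star π).norm = (p : ℤ) := by rw [Zsqrtd.norm_conj, hπn]
  have hstarπ : Prime (star π) := prime_of_prime_norm (by rw [hstarn]; simpa using hpp)
  have hstarne : star π ≠ 0 := hstarπ.ne_zero
  have hnass : ¬ Associated π (star π) := not_associated_star hpp hp1 hπn
  set f : ℕ → GaussianInt := fun j => canon (π^j * (star π)^(k-j)) with hf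
  have hwne : ∀ j, π^j * (star π)^(k-j) ≠ 0 := fun j =>
    mul_ne_zero (pow_ne_zero _ hπne) (pow_ne_zero _ hstarne)
  have hwnorm : ∀ j, j ≤ k → (π^j * (star π)^(k-j)).norm = ((p^k : ℕ) : ℤ) := by
    intro j hj
    rw [Zsqrtd.norm_mul, norm_pow, norm_pow, hπn, hstarn, ← pow_add]
    push_cast
    congr 1
    omega
  have heq : S0 (p^k) = (Finset.range (k+1)).image f := by
    ext z
    rw [mem_S0, Finset.mem_image]
    constructor
    · rintro ⟨hznorm, hzq0⟩
      obtain ⟨a, b, hab, horb⟩ := pow_rep_split hpp hπ hπn k z hznorm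
      refine ⟨a, Finset.mem_range.mpr (by omega), ?_⟩
      have hba : k - a = b := by omega
      rw [hf]
      simp only
      rw [hba]
      exact canon_eq_of (mul_ne_zero (pow_ne_zero _ hπne) (pow_ne_zero _ hstarne)) horb hzq0
    · rintro ⟨j, hjr, rfl⟩
      have hj : j ≤ k := by have := Finset.mem_range.mp hjr; omega
      exact ⟨by rw [hf]; simp only; rw [canon_norm (hwne j), hwnorm j hj], canon_q0 (hwne j)⟩
  rw [heq]
  rw [Finset.card_image_of_injOn, Finset.card_range]
  intro j1 hj1 j2 hj2 hfeq
  simp only [Finset.mem_coe, Finset.mem_range] at hj1 hj2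
  rw [hf] at hfeq
  simp only at hfeq
  have horb : Orb (π^j1 * (star π)^(k-j1)) (π^j2 * (star π)^(k-j2)) :=
    orb_of_canon_eq (hwne j1) (hwne j2) hfeq
  have hassoc := associated_of_orb horb
  rcases lt_trichotomy j1 j2 with hlt | heq' | hlt
  · exfalso
    apply prime_power_cancel hπ hstarπ hnass (show 0 < j2 - j1 by omega)
      (x := j1) (y' := k - j2)
    have e1 : k - j1 = (k - j2) + (j2 - j1) := by omega
    have e2 : j2 = j1 + (j2 - j1) := by omega
    rw [← e1, ← e2]
    exact hassoc
  · exact heq'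
  · exfalso
    apply prime_power_cancel hstarπ hπ (fun hh => hnass hh.symm) (show 0 < j1 - j2 by omega)
      (x := k - j1) (y' := j2)
    have hassoc' : Associated ((star π)^(k-j2) * π^(j2)) ((star π)^(k-j1) * π^(j1)) := by
      rw [mul_comm ((star π)^(k-j2)), mul_comm ((star π)^(k-j1))]
      exact hassoc.symm
    have e1 : j1 = j2 + (j1 - j2) := by omega
    have e2 : k - j2 = (k - j1) + (j1 - j2) := by omega
    rw [← e1, ← e2]
    exact hassoc'.symm



open ArithmeticFunction
open scoped ArithmeticFunction.zeta

def chi4 : ArithmeticFunction ℚ :=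
  ⟨fun n => ((ZMod.χ₄ ((n : ℕ) : ZMod 4) : ℤ) : ℚ), by
    show ((ZMod.χ₄ ((0 : ℕ) : ZMod 4) : ℤ) : ℚ) = 0
    have h : ZMod.χ₄ ((0 : ℕ) : ZMod 4) = 0 := by decide
    rw [h]; simp⟩

lemma chi4_apply (n : ℕ) : chi4 n = ((ZMod.χ₄ (n : ZMod 4) : ℤ) : ℚ) := rfl

lemma chi4_mult : chi4.IsMultiplicative := by
  constructor
  · rw [chi4_apply]
    have h : ZMod.χ₄ ((1 : ℕ) : ZMod 4) = 1 := by decide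
    rw [h]; simp
  · intro m n _
    rw [chi4_apply, chi4_apply, chi4_apply]
    have h : ((m * n : ℕ) : ZMod 4) = ((m : ℕ) : ZMod 4) * ((n : ℕ) : ZMod 4) := by push_cast; ring
    rw [h, map_mul]
    push_cast
    ring

lemma sum_chi4 (n : ℕ) :
    ∑ d ∈ n.divisors, ((ZMod.χ₄ (d : ZMod 4) : ℤ) : ℚ) = ((↑ζ : ArithmeticFunction ℚ) * chi4) n := by
  rw [coe_zeta_mul_apply]
  exact Finset.sum_congr rfl fun d _ => (chi4_apply d).symm

lemma G_mult : (((↑ζ : ArithmeticFunction ℚ)) * chi4).IsMultiplicative :=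
  (isMultiplicative_zeta.natCast).mul chi4_mult

lemma chi4_pow (p j : ℕ) : chi4 (p^j) = ((ZMod.χ₄ ((p : ℕ) : ZMod 4) : ℤ) : ℚ)^j := by
  rw [chi4_apply]
  have h : ((p^j : ℕ) : ZMod 4) = ((p : ℕ) : ZMod 4)^j := by push_cast; ring
  rw [h, map_pow]
  push_cast
  ring

lemma G_pp {p : ℕ} (hpp : p.Prime) (k : ℕ) :
    ((↑ζ : ArithmeticFunction ℚ) * chi4) (p^k) = ∑ j ∈ Finset.range (k+1), chi4 (p^j) := by
  rw [← sum_chi4, Nat.sum_divisors_prime_pow hpp]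
  simp only [chi4_apply]

lemma key : ∀ n : ℕ, 0 < n →
    ((S0 n).card : ℚ) = ∑ d ∈ n.divisors, ((ZMod.χ₄ (d : ZMod 4) : ℤ) : ℚ) := by
  have hcard1 : (S0 1).card = 1 := by simpa using card_S0_two 0
  intro n
  induction n using Nat.recOnPosPrimePosCoprime with
  | prime_pow p k hp hk =>
    intro _
    have hpp : p.Prime := hp
    rw [sum_chi4, G_pp hpp]
    rcases eq_or_ne p 2 with rfl | hp2
    · rw [card_S0_two k]
      have hterm : ∀ j ∈ Finset.range (k+1), chi4 (2^j) = (0:ℚ)^j := by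
        intro j _
        rw [chi4_pow]
        have h : ZMod.χ₄ ((2 : ℕ) : ZMod 4) = 0 := by decide
        rw [h]
        push_cast
        ring
      rw [Finset.sum_congr rfl hterm]
      rw [Finset.sum_range_succ']
      simp
    · have hodd : p % 2 = 1 := (hpp.eq_two_or_odd).resolve_left hp2
      have h14 : p % 4 = 1 ∨ p % 4 = 3 := by omega
      rcases h14 with hp1 | hp3
      · rw [card_S0_one_mod_four hpp hp1 k]
        have hterm : ∀ j ∈ Finset.range (k+1), chi4 (p^j) = 1 := by
          intro j _
          rw [chi4_pow, ZMod.χ₄_nat_one_mod_four hp1]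
          norm_num
        rw [Finset.sum_congr rfl hterm, Finset.sum_const, Finset.card_range]
        push_cast
        ring
      · rw [card_S0_three hpp hp3 k]
        have hterm : ∀ j ∈ Finset.range (k+1), chi4 (p^j) = (-1:ℚ)^j := by
          intro j _
          rw [chi4_pow, ZMod.χ₄_nat_three_mod_four hp3]
          push_cast
          ring
        rw [Finset.sum_congr rfl hterm, neg_one_geom_sum]
        by_cases hke : k % 2 = 0
        · rw [if_pos hke, if_neg (by
            rw [Nat.even_add_one]
            intro h
            exact h (Nat.even_iff.mpr hke))]
          norm_num
        · rw [if_neg hke, if_pos (by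
            rw [Nat.even_add_one]
            intro h
            exact hke (Nat.even_iff.mp h))]
          norm_num
  | zero => intro h; omega
  | one =>
    intro _
    rw [hcard1]
    rw [sum_chi4]
    have : ((↑ζ : ArithmeticFunction ℚ) * chi4) 1 = 1 := G_mult.1
    rw [this]
    norm_num
  | coprime a b ha hb hab iha ihb =>
    intro _
    rw [card_S0_mul (by omega) (by omega) hab]
    rw [sum_chi4, G_mult.2 hab, ← sum_chi4, ← sum_chi4, ← iha (by omega), ← ihb (by omega)]
    push_cast
    ring



end TwoSq

/-- `r(n)/4` is multiplicative and equals `(1 ⋆ χ₄)(n) = ∑_{d ∣ n} χ₄(d)`. -/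
theorem sumTwoSquares_div_four (r4 : ℕ → ℚ) (hr4 : ∀ n, r4 n = (sumTwoSquaresReps n : ℚ) / 4) :
    r4 1 = 1 ∧
    (∀ m n : ℕ, 0 < m → 0 < n → Nat.Coprime m n → r4 (m * n) = r4 m * r4 n) ∧
    (∀ n : ℕ, 0 < n → r4 n = ∑ d ∈ n.divisors, ((ZMod.χ₄ (d : ZMod 4) : ℤ) : ℚ)) := by
  have hmain : ∀ n : ℕ, 0 < n → r4 n = ((TwoSq.S0 n).card : ℚ) := by
    intro n hn
    rw [hr4, ← TwoSq.card_S, TwoSq.card_S_eq n hn]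
    push_cast
    ring
  refine ⟨?_, ?_, ?_⟩
  · rw [hmain 1 one_pos]
    have h1 : (TwoSq.S0 1).card = 1 := by simpa using TwoSq.card_S0_two 0
    rw [h1]
    norm_num
  · intro m n hm hn hco
    rw [hmain _ (Nat.mul_pos hm hn), hmain m hm, hmain n hn,
      TwoSq.card_S0_mul hm hn hco]
    push_cast
    ring
  · intro n hn
    rw [hmain n hn]
    exact TwoSq.key n hn
end

section
/- For all positive integers a ≤ b with a > 1, the parity of #{p prime : a ≤ p ≤ b} equals the parity of (T₂*(b) − T₂*(a−1))/2 − Σ_{j ≥ 2} #{p prime : a^{1/j} ≤ p ≤ b^{1/j}}, where T₂*(x) = Σ_{n ≤ x} τ₂*(n). -/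
/-- `T₂*(x) = ∑_{n ≤ x} τ₂*(n)`, the summatory function of the number of
unitary divisors. -/
def T2star (x : ℕ) : ℕ :=
  ∑ n ∈ Finset.Icc 1 x, (n.divisors.filter (fun d => Nat.gcd d (n / d) = 1)).card

lemma unitary_aux (n : ℕ) (hn : n ≠ 0) (S : Finset ℕ) (hS : S ⊆ n.primeFactors) :
    (∏ p ∈ S, p ^ n.factorization p) ∈
      n.divisors.filter (fun d => Nat.gcd d (n / d) = 1) ∧
    (∏ p ∈ S, p ^ n.factorization p).primeFactors = S := by
  classical
  have hself : ∏ p ∈ n.primeFactors, p ^ n.factorization p = n := by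
    rw [← Nat.prod_factorization_eq_prod_primeFactors]
    exact Nat.factorization_prod_pow_eq_self hn
  have hppos : ∀ p ∈ S, p ^ n.factorization p ≠ 0 := fun p hp =>
    pow_ne_zero _ (Nat.Prime.ne_zero (Nat.prime_of_mem_primeFactors (hS hp)))
  set m := ∏ p ∈ S, p ^ n.factorization p with hm
  have hm0 : m ≠ 0 := Finset.prod_ne_zero_iff.2 hppos
  have hdvd : m ∣ n := by
    rw [← hself]
    exact Finset.prod_dvd_prod_of_subset S n.primeFactors _ hS
  have hfacm : ∀ q, m.factorization q = if q ∈ S then n.factorization q else 0 := by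
    intro q
    rw [hm, Nat.factorization_prod hppos]
    rw [Finset.sum_apply']
    have : ∀ p ∈ S, (p ^ n.factorization p).factorization q
        = if p = q then n.factorization p else 0 := by
      intro p hp
      rw [Nat.Prime.factorization_pow (Nat.prime_of_mem_primeFactors (hS hp))]
      exact Finsupp.single_apply
    rw [Finset.sum_congr rfl this, Finset.sum_ite_eq' S q (fun p => n.factorization p)]
  have hpf : m.primeFactors = S := by
    ext q
    rw [← Nat.support_factorization, Finsupp.mem_support_iff, hfacm q]
    constructor
    · intro h
      by_contra hq
      simp [hq] at h
    · intro hq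
      simpa [hq] using Nat.prime_of_mem_primeFactors (hS hq) |>.factorization_pos_of_dvd hn
        (Nat.dvd_of_mem_primeFactors (hS hq)) |>.ne'
  have hk0 : n / m ≠ 0 := Nat.div_ne_zero_iff_of_dvd hdvd |>.2 ⟨hn, hm0⟩
  have hcop : Nat.Coprime m (n / m) := by
    rw [← Nat.disjoint_primeFactors hm0 hk0, hpf, Finset.disjoint_left]
    intro q hq hq'
    rw [← Nat.support_factorization, Finsupp.mem_support_iff,
      Nat.factorization_div hdvd, Finsupp.tsub_apply, hfacm q, if_pos hq] at hq'
    exact hq' (Nat.sub_self _)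
  exact ⟨Finset.mem_filter.2 ⟨Nat.mem_divisors.2 ⟨hdvd, hn⟩, hcop⟩, hpf⟩

lemma unitary_card (n : ℕ) (hn : n ≠ 0) :
    (n.divisors.filter (fun d => Nat.gcd d (n / d) = 1)).card = 2 ^ n.primeFactors.card := by
  classical
  rw [← Finset.card_powerset]
  refine Finset.card_bij' (fun d _ => d.primeFactors)
    (fun S _ => ∏ p ∈ S, p ^ n.factorization p) ?_ ?_ ?_ ?_
  · intro d hd
    simp only [Finset.mem_filter, Nat.mem_divisors] at hd
    exact Finset.mem_powerset.2 (Nat.primeFactors_mono hd.1.1 hn)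
  · intro S hS
    exact (unitary_aux n hn S (Finset.mem_powerset.1 hS)).1
  · intro d hd
    simp only [Finset.mem_filter, Nat.mem_divisors] at hd
    obtain ⟨⟨hdvd, -⟩, hcop⟩ := hd
    have hd0 : d ≠ 0 := by
      rintro rfl
      exact hn (Nat.eq_zero_of_zero_dvd hdvd)
    have hq0 : n / d ≠ 0 := Nat.div_ne_zero_iff_of_dvd hdvd |>.2 ⟨hn, hd0⟩
    have key : ∀ p ∈ d.primeFactors, n.factorization p = d.factorization p := by
      intro p hp
      have hn_eq : n = d * (n / d) := (Nat.mul_div_cancel' hdvd).symm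
      rw [hn_eq, Nat.factorization_mul hd0 hq0, Finsupp.add_apply]
      have : (n / d).factorization p = 0 := by
        rw [Nat.factorization_eq_zero_iff]
        right; left
        intro hpd
        have : p ∣ Nat.gcd d (n / d) :=
          Nat.dvd_gcd (Nat.dvd_of_mem_primeFactors hp) hpd
        rw [hcop] at this
        exact (Nat.prime_of_mem_primeFactors hp).one_lt.ne' (Nat.eq_one_of_dvd_one this)
      omega
    show ∏ p ∈ d.primeFactors, p ^ n.factorization p = d
    rw [Finset.prod_congr rfl (fun p hp => by rw [key p hp]),
      ← Nat.prod_factorization_eq_prod_primeFactors]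
    exact Nat.factorization_prod_pow_eq_self hd0
  · intro S hS
    exact (unitary_aux n hn S (Finset.mem_powerset.1 hS)).2

lemma primepow_count (a b : ℕ) :
    (((Finset.Icc a b).filter IsPrimePow).card : ℕ) =
    ∑ j ∈ Finset.Icc 1 b,
      ((Finset.Icc 1 b).filter (fun p => Nat.Prime p ∧ a ≤ p ^ j ∧ p ^ j ≤ b)).card := by
  classical
  rw [← Finset.card_sigma]
  refine Finset.card_bij' (fun n _ => ⟨n.factorization n.minFac, n.minFac⟩)
    (fun x _ => x.2 ^ x.1) ?_ ?_ ?_ ?_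
  · rintro n hn
    simp only [Finset.mem_filter, Finset.mem_Icc] at hn
    obtain ⟨⟨han, hnb⟩, hpp⟩ := hn
    obtain ⟨p, k, hp, hk, rfl⟩ := hpp
    rw [← Nat.prime_iff] at hp
    simp only [Finset.mem_sigma, Finset.mem_Icc, Finset.mem_filter]
    rw [hp.pow_minFac hk.ne', Nat.Prime.factorization_pow hp, Finsupp.single_eq_same]
    have h2p : 2 ≤ p := hp.two_le
    have hkb : k ≤ b := le_trans (le_trans (Nat.lt_two_pow_self (n := k)).le
      (Nat.pow_le_pow_left h2p k)) hnb
    have hpb : p ≤ b := le_trans (Nat.le_self_pow hk.ne' p) hnb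
    exact ⟨⟨hk, hkb⟩, ⟨hp.one_lt.le, hpb⟩, hp, han, hnb⟩
  · rintro ⟨j, p⟩ hx
    simp only [Finset.mem_sigma, Finset.mem_Icc, Finset.mem_filter] at hx
    obtain ⟨⟨hj1, hjb⟩, -, hp, hap, hpb⟩ := hx
    simp only [Finset.mem_filter, Finset.mem_Icc]
    exact ⟨⟨hap, hpb⟩, hp.prime.isPrimePow.pow (by omega : j ≠ 0)⟩
  · rintro n hn
    simp only [Finset.mem_filter] at hn
    exact hn.2.minFac_pow_factorization_eq
  · rintro ⟨j, p⟩ hx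
    simp only [Finset.mem_sigma, Finset.mem_Icc, Finset.mem_filter] at hx
    obtain ⟨⟨hj1, hjb⟩, -, hp, -, -⟩ := hx
    simp [hp.pow_minFac (by omega : j ≠ 0), Nat.Prime.factorization_pow hp]

lemma rpow_cond (a b p j : ℕ) (hj : 1 ≤ j) :
    ((a : ℝ) ^ ((1 : ℝ) / j) ≤ (p : ℝ) ∧ (p : ℝ) ≤ (b : ℝ) ^ ((1 : ℝ) / j)) ↔
      (a ≤ p ^ j ∧ p ^ j ≤ b) := by
  have hj0 : (0 : ℝ) < (j : ℝ) := by exact_mod_cast hj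
  rw [one_div, Real.rpow_inv_le_iff_of_pos (by positivity) (by positivity) hj0,
    Real.le_rpow_inv_iff_of_pos (by positivity) (by positivity) hj0,
    Real.rpow_natCast]
  exact_mod_cast Iff.rfl

lemma modeq_sum {s : Finset ℕ} (f g : ℕ → ℤ) (n : ℤ)
    (h : ∀ i ∈ s, f i ≡ g i [ZMOD n]) :
    ∑ i ∈ s, f i ≡ ∑ i ∈ s, g i [ZMOD n] := by
  unfold Int.ModEq
  rw [Finset.sum_int_mod s n f, Finset.sum_int_mod s n g]
  exact congrArg (· % n) (Finset.sum_congr rfl h)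

open scoped Classical in
/-- The parity of the number of primes in `[a, b]` equals the parity of
`(T₂*(b) - T₂*(a-1))/2 - ∑_{j ≥ 2} #{p prime : a^{1/j} ≤ p ≤ b^{1/j}}`. -/
theorem parity_primes_interval (a b : ℕ) (ha : 1 < a) (hab : a ≤ b) :
    (((Finset.Icc a b).filter Nat.Prime).card : ℤ) ≡
      ((T2star b : ℤ) - (T2star (a - 1) : ℤ)) / 2 -
        ∑ j ∈ Finset.Icc 2 b,
          (((Finset.Icc 1 b).filter (fun p => Nat.Prime p ∧
            (a : ℝ) ^ ((1 : ℝ) / j) ≤ (p : ℝ) ∧ (p : ℝ) ≤ (b : ℝ) ^ ((1 : ℝ) / j))).card : ℤ)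
      [ZMOD 2] := by
  have hb2 : 2 ≤ b := le_trans ha hab
  -- Step 1: the difference of summatory functions is the sum over `Icc a b`.
  have hsplitN : T2star b = T2star (a - 1) +
      ∑ n ∈ Finset.Icc a b, (n.divisors.filter (fun d => Nat.gcd d (n / d) = 1)).card := by
    unfold T2star
    rw [show Finset.Icc 1 b = Finset.Icc 1 (a - 1) ∪ Finset.Icc a b from by
        ext x; simp only [Finset.mem_Icc, Finset.mem_union]; omega,
      Finset.sum_union (by
        rw [Finset.disjoint_left]
        intro x hx hx'
        simp only [Finset.mem_Icc] at hx hx'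
        omega)]
  have hsplit : (T2star b : ℤ) - (T2star (a - 1) : ℤ) =
      ∑ n ∈ Finset.Icc a b,
        ((n.divisors.filter (fun d => Nat.gcd d (n / d) = 1)).card : ℤ) := by
    rw [hsplitN]
    push_cast
    ring
  -- Step 2: each term is `2 * 2 ^ (ω n - 1)`.
  have hterm : ∀ n ∈ Finset.Icc a b,
      ((n.divisors.filter (fun d => Nat.gcd d (n / d) = 1)).card : ℤ) =
        2 * 2 ^ (n.primeFactors.card - 1) := by
    intro n hn
    simp only [Finset.mem_Icc] at hn
    have hn1 : 1 < n := lt_of_lt_of_le ha hn.1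
    have hω : 1 ≤ n.primeFactors.card :=
      Finset.card_pos.2 (Nat.nonempty_primeFactors.2 hn1)
    obtain ⟨k, hk⟩ : ∃ k, n.primeFactors.card = k + 1 := ⟨n.primeFactors.card - 1, by omega⟩
    rw [unitary_card n (by omega), hk]
    push_cast
    ring
  rw [hsplit, Finset.sum_congr rfl hterm, ← Finset.mul_sum,
    Int.mul_ediv_cancel_left _ two_ne_zero]
  -- Step 3: the sum of `2 ^ (ω n - 1)` is congruent to the number of prime powers.
  have h1 : (∑ n ∈ Finset.Icc a b, (2 : ℤ) ^ (n.primeFactors.card - 1)) ≡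
      (((Finset.Icc a b).filter IsPrimePow).card : ℤ) [ZMOD 2] := by
    have step : (∑ n ∈ Finset.Icc a b, (2 : ℤ) ^ (n.primeFactors.card - 1)) ≡
        ∑ n ∈ Finset.Icc a b,
          (if n.primeFactors.card = 1 then (1 : ℤ) else 0) [ZMOD 2] := by
      refine modeq_sum _ _ _ ?_
      intro n hn
      simp only [Finset.mem_Icc] at hn
      have hn1 : 1 < n := lt_of_lt_of_le ha hn.1
      have hω : 1 ≤ n.primeFactors.card :=
        Finset.card_pos.2 (Nat.nonempty_primeFactors.2 hn1)
      by_cases h : n.primeFactors.card = 1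
      · simp [h]
      · obtain ⟨k, hk⟩ : ∃ k, n.primeFactors.card - 1 = k + 1 := ⟨n.primeFactors.card - 2, by omega⟩
        rw [hk, if_neg h]
        exact (Int.modEq_iff_dvd.2 (by simp [pow_succ])).symm
    refine step.trans ?_
    rw [Finset.sum_boole]
    have : (Finset.Icc a b).filter (fun n => n.primeFactors.card = 1) =
        (Finset.Icc a b).filter IsPrimePow := by
      apply Finset.filter_congr
      intro n _
      exact isPrimePow_iff_card_primeFactors_eq_one.symm
    rw [this]
  -- Step 4: rewrite the rpow conditions in the subtracted sum.
  have h2 : ∀ j ∈ Finset.Icc 2 b,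
      ((Finset.Icc 1 b).filter (fun p => Nat.Prime p ∧
        (a : ℝ) ^ ((1 : ℝ) / j) ≤ (p : ℝ) ∧ (p : ℝ) ≤ (b : ℝ) ^ ((1 : ℝ) / j))) =
      ((Finset.Icc 1 b).filter (fun p => Nat.Prime p ∧ a ≤ p ^ j ∧ p ^ j ≤ b)) := by
    intro j hj
    simp only [Finset.mem_Icc] at hj
    apply Finset.filter_congr
    intro p _
    rw [and_congr_right_iff]
    intro _
    exact rpow_cond a b p j (by omega)
  -- Step 5: the `j = 1` term is the count of primes in `[a, b]`.
  have hins : Finset.Icc 1 b = insert 1 (Finset.Icc 2 b) := by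
    ext x
    simp only [Finset.mem_Icc, Finset.mem_insert]
    omega
  have hone : ((Finset.Icc 1 b).filter (fun p => Nat.Prime p ∧ a ≤ p ^ 1 ∧ p ^ 1 ≤ b)) =
      (Finset.Icc a b).filter Nat.Prime := by
    ext p
    simp only [Finset.mem_filter, Finset.mem_Icc, pow_one]
    constructor
    · rintro ⟨-, hp, h3, h4⟩
      exact ⟨⟨h3, h4⟩, hp⟩
    · rintro ⟨⟨h3, h4⟩, hp⟩
      exact ⟨⟨by omega, h4⟩, hp, h3, h4⟩
  -- Conclusion.
  calc (((Finset.Icc a b).filter Nat.Prime).card : ℤ)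
      = (∑ j ∈ Finset.Icc 1 b,
          (((Finset.Icc 1 b).filter
            (fun p => Nat.Prime p ∧ a ≤ p ^ j ∧ p ^ j ≤ b)).card : ℤ)) -
        ∑ j ∈ Finset.Icc 2 b,
          (((Finset.Icc 1 b).filter
            (fun p => Nat.Prime p ∧ a ≤ p ^ j ∧ p ^ j ≤ b)).card : ℤ) := by
        have hsum : ∀ f : ℕ → ℤ,
            ∑ j ∈ Finset.Icc 1 b, f j = f 1 + ∑ j ∈ Finset.Icc 2 b, f j := by
          intro f
          rw [hins, Finset.sum_insert (by simp)]
        rw [hsum, hone]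
        ring
    _ ≡ (∑ n ∈ Finset.Icc a b, (2 : ℤ) ^ (n.primeFactors.card - 1)) -
        ∑ j ∈ Finset.Icc 2 b,
          (((Finset.Icc 1 b).filter (fun p => Nat.Prime p ∧
            (a : ℝ) ^ ((1 : ℝ) / j) ≤ (p : ℝ) ∧
              (p : ℝ) ≤ (b : ℝ) ^ ((1 : ℝ) / j))).card : ℤ) [ZMOD 2] := by
        refine Int.ModEq.sub ?_ ?_
        · have hc : (((Finset.Icc a b).filter IsPrimePow).card : ℤ) =
              ∑ j ∈ Finset.Icc 1 b,
                (((Finset.Icc 1 b).filter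
                  (fun p => Nat.Prime p ∧ a ≤ p ^ j ∧ p ^ j ≤ b)).card : ℤ) := by
            exact_mod_cast congrArg (Nat.cast : ℕ → ℤ) (primepow_count a b)
          rw [← hc]
          exact h1.symm
        · have e : (∑ j ∈ Finset.Icc 2 b,
              (((Finset.Icc 1 b).filter (fun p => Nat.Prime p ∧
                (a : ℝ) ^ ((1 : ℝ) / j) ≤ (p : ℝ) ∧
                  (p : ℝ) ≤ (b : ℝ) ^ ((1 : ℝ) / j))).card : ℤ)) =
              ∑ j ∈ Finset.Icc 2 b,
                (((Finset.Icc 1 b).filter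
                  (fun p => Nat.Prime p ∧ a ≤ p ^ j ∧ p ^ j ≤ b)).card : ℤ) :=
            Finset.sum_congr rfl fun j hj => by rw [h2 j hj]
          rw [e]
end
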